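/- If A and B are homological Zₙ-sets in a topological space X, then their union A ∪ B is a homological Zₙ-set in X. -/

import Mathlib

open CategoryTheory AlgebraicTopology Limits

/-- The singular chain complex of a topological space, with `ℤ` coefficients. -/
noncomputable def singularChains (X : Type) [TopologicalSpace X] :
    ChainComplex AddCommGrpCat ℕ :=
  (alternatingFaceMapComplex AddCommGrpCat).obj
    (TopCat.toSSet.obj (TopCat.of X) ⋙ AddCommGrpCat.free)

/-- The chain map induced by a continuous map. -/
noncomputable def singularChainsMap {X Y : Type} [TopologicalSpace X] [TopologicalSpace Y]
    (f : C(X, Y)) : singularChains X ⟶ singularChains Y :=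
  (alternatingFaceMapComplex AddCommGrpCat).map
    (Functor.whiskerRight (TopCat.toSSet.map (TopCat.ofHom f : TopCat.of X ⟶ TopCat.of Y)) AddCommGrpCat.free)

/-- The relative singular homology `H_k(W, V)` of a pair `(W, V)` with `V ⊆ W`,
defined as the homology of the cokernel of the map of singular chain complexes
induced by the inclusion. -/
noncomputable def relativeSingularHomology (W : Type) [TopologicalSpace W] (V : Set W)
    (k : ℕ) : AddCommGrpCat :=
  (cokernel (singularChainsMap ⟨(Subtype.val : V → W), continuous_subtype_val⟩)).homology k

/-- `A` is a homological `Z_n`-set in `X`: `A` is closed and `H_k(U, U \ A) = 0`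
for every open `U ⊆ X` and every `k ≤ n`. -/
def IsHomologicalZSet (X : Type) [TopologicalSpace X] (n : ℕ) (A : Set X) : Prop :=
  IsClosed A ∧ ∀ U : Set X, IsOpen U → ∀ k ≤ n,
    IsZero (relativeSingularHomology U {x : U | (x : X) ∉ A} k)

/-! ### Auxiliary lemmas -/

lemma singularChainsMap_id (X : Type) [TopologicalSpace X] :
    singularChainsMap (ContinuousMap.id X) = 𝟙 (singularChains X) := by
  unfold singularChainsMap singularChains
  rw [show (TopCat.ofHom (ContinuousMap.id X) : TopCat.of X ⟶ TopCat.of X) = 𝟙 (TopCat.of X) from rfl]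
  rw [TopCat.toSSet.map_id, Functor.whiskerRight_id', CategoryTheory.Functor.map_id]

lemma singularChainsMap_comp {X Y Z : Type} [TopologicalSpace X] [TopologicalSpace Y]
    [TopologicalSpace Z] (f : C(X, Y)) (g : C(Y, Z)) :
    singularChainsMap (g.comp f) = singularChainsMap f ≫ singularChainsMap g := by
  unfold singularChainsMap singularChains
  rw [← CategoryTheory.Functor.map_comp, ← Functor.whiskerRight_comp, ← CategoryTheory.Functor.map_comp]
  rfl

/-- The continuous map underlying a homeomorphism. -/
def Homeomorph.toContinuousMap {X Y : Type} [TopologicalSpace X] [TopologicalSpace Y]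
    (e : X ≃ₜ Y) : C(X, Y) := ⟨e, e.continuous⟩

@[simp] lemma Homeomorph.toContinuousMap_apply' {X Y : Type} [TopologicalSpace X]
    [TopologicalSpace Y] (e : X ≃ₜ Y) (x : X) : e.toContinuousMap x = e x := rfl

/-- The isomorphism of singular chain complexes induced by a homeomorphism. -/
noncomputable def singularChainsIso {X Y : Type} [TopologicalSpace X] [TopologicalSpace Y]
    (e : X ≃ₜ Y) : singularChains X ≅ singularChains Y where
  hom := singularChainsMap e.toContinuousMap
  inv := singularChainsMap e.symm.toContinuousMap
  hom_inv_id := by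
    rw [← singularChainsMap_comp,
      show e.symm.toContinuousMap.comp e.toContinuousMap = ContinuousMap.id X by
        ext x; simp,
      singularChainsMap_id]
  inv_hom_id := by
    rw [← singularChainsMap_comp,
      show e.toContinuousMap.comp e.symm.toContinuousMap = ContinuousMap.id Y by
        ext x; simp,
      singularChainsMap_id]

lemma free_map_injective {α β : Type} {f : α → β} (hf : Function.Injective f) :
    Function.Injective (AddCommGrpCat.free.map (TypeCat.ofHom f)) := by
  rcases isEmpty_or_nonempty α with h | h
  · intro a b _
    have hz : ∀ x : FreeAbelianGroup α, x = 0 := fun x => by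
      induction x using FreeAbelianGroup.induction_on with
      | zero => rfl
      | of y => exact (h.false y).elim
      | neg y hy => rw [hy]; simp
      | add y z hy hz => rw [hy, hz]; simp
    rw [hz a, hz b]
  · intro a b hab
    have key : ∀ x : (AddCommGrpCat.free.obj α),
        (AddCommGrpCat.free.map (TypeCat.ofHom f) ≫ AddCommGrpCat.free.map (TypeCat.ofHom (Function.invFun f))) x
          = x := by
      rw [← AddCommGrpCat.free.map_comp]
      have : (TypeCat.ofHom f ≫ TypeCat.ofHom (Function.invFun f) : α ⟶ α) = 𝟙 α := by
        ext x; exact Function.leftInverse_invFun hf x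
      rw [this, CategoryTheory.Functor.map_id]
      intro x; rfl
    have h1 := key a
    have h2 := key b
    rw [show ((AddCommGrpCat.free.map (TypeCat.ofHom f) ≫ AddCommGrpCat.free.map (TypeCat.ofHom (Function.invFun f))) a
        = AddCommGrpCat.free.map (TypeCat.ofHom (Function.invFun f)) (AddCommGrpCat.free.map (TypeCat.ofHom f) a)) from rfl, hab] at h1
    rw [show ((AddCommGrpCat.free.map (TypeCat.ofHom f) ≫ AddCommGrpCat.free.map (TypeCat.ofHom (Function.invFun f))) b
        = AddCommGrpCat.free.map (TypeCat.ofHom (Function.invFun f)) (AddCommGrpCat.free.map (TypeCat.ofHom f) b)) from rfl] at h2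
    rw [← h1, h2]

open Opposite Simplicial in
lemma singularChainsMap_f_injective {X Y : Type} [TopologicalSpace X] [TopologicalSpace Y]
    (f : C(X,Y)) (hf : Function.Injective f) (n : ℕ) :
    Function.Injective ((singularChainsMap f).f n) := by
  have e : (singularChainsMap f).f n
      = AddCommGrpCat.free.map ((TopCat.toSSet.map (TopCat.ofHom f : TopCat.of X ⟶ TopCat.of Y)).app (op ⦋n⦌)) := by
    unfold singularChainsMap
    rw [alternatingFaceMapComplex_map_f]
    rfl
  rw [e]
  apply free_map_injective
  intro σ τ h
  apply ULift.ext
  refine TopCat.ext (fun p => ?_)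
  have h' : σ.down ≫ TopCat.ofHom f = τ.down ≫ TopCat.ofHom f := congrArg ULift.down h
  exact hf (ConcreteCategory.congr_hom h' p)

section SES

variable {K L : ChainComplex AddCommGrpCat ℕ}

lemma exact_eval (φ : K ⟶ L) (i : ℕ) :
    (ShortComplex.mk (φ.f i) ((cokernel.π φ).f i)
      (by rw [← HomologicalComplex.comp_f, cokernel.condition]; rfl)).Exact :=
  ShortComplex.exact_of_g_is_cokernel _
    (isColimitOfHasCokernelOfPreservesColimit
      (HomologicalComplex.eval AddCommGrpCat (ComplexShape.down ℕ) i) φ)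

lemma mem_range_of_pi_zero (φ : K ⟶ L) (i : ℕ) (y : L.X i)
    (hy : (cokernel.π φ).f i y = 0) : ∃ z, φ.f i z = y :=
  ((ShortComplex.ab_exact_iff _).1 (exact_eval φ i)) y hy

lemma pi_surjective (φ : K ⟶ L) (i : ℕ) :
    Function.Surjective ((cokernel.π φ).f i) := by
  rw [← AddCommGrpCat.epi_iff_surjective]
  infer_instance

lemma isZero_of_ses {A B C : ChainComplex AddCommGrpCat ℕ} (a : A ⟶ B) (b : B ⟶ C)
    (hb : ∀ i, Function.Injective (b.f i))
    (n : ℕ)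
    (h1 : IsZero ((cokernel a).homology n))
    (h3 : IsZero ((cokernel b).homology n)) :
    IsZero ((cokernel (a ≫ b)).homology n) := by
  let S : ShortComplex (ChainComplex AddCommGrpCat ℕ) :=
    ShortComplex.mk (cokernel.map a (a ≫ b) (𝟙 A) b (by simp))
      (cokernel.desc (a ≫ b) (cokernel.π b) (by simp))
      (by
        apply coequalizer.hom_ext
        simp [cokernel.map])
  have hS : S.ShortExact := by
    rw [HomologicalComplex.shortExact_iff_degreewise_shortExact]
    intro i
    have comm1 : ∀ z : B.X i, S.f.f i ((cokernel.π a).f i z)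
        = (cokernel.π (a ≫ b)).f i (b.f i z) := by
      intro z
      have h0 : (cokernel.π a ≫ S.f).f i = (b ≫ cokernel.π (a ≫ b)).f i := by
        congr 1
        simp [S, cokernel.map]
      rw [HomologicalComplex.comp_f, HomologicalComplex.comp_f] at h0
      have := ConcreteCategory.congr_hom h0 z
      simpa using this
    have comm2 : ∀ y : C.X i, S.g.f i ((cokernel.π (a ≫ b)).f i y)
        = (cokernel.π b).f i y := by
      intro y
      have h0 : (cokernel.π (a ≫ b) ≫ S.g).f i = (cokernel.π b).f i := by
        congr 1
        simp [S]
      rw [HomologicalComplex.comp_f] at h0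
      have := ConcreteCategory.congr_hom h0 y
      simpa using this
    refine ShortComplex.ShortExact.mk' ?_ ?_ ?_
    · rw [ShortComplex.ab_exact_iff]
      intro x₂ hx₂
      obtain ⟨y, rfl⟩ := pi_surjective (a ≫ b) i x₂
      have hx₂' : (cokernel.π b).f i y = 0 := by
        rw [← comm2 y]; exact hx₂
      obtain ⟨z, rfl⟩ := mem_range_of_pi_zero b i y hx₂'
      exact ⟨(cokernel.π a).f i z, comm1 z⟩
    · rw [AddCommGrpCat.mono_iff_injective]
      intro u v huv
      obtain ⟨z, rfl⟩ := pi_surjective a i u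
      obtain ⟨w, rfl⟩ := pi_surjective a i v
      have huv' : (cokernel.π (a ≫ b)).f i (b.f i z)
          = (cokernel.π (a ≫ b)).f i (b.f i w) := by
        rw [← comm1 z, ← comm1 w]; exact huv
      have : (cokernel.π (a ≫ b)).f i (b.f i z - b.f i w) = 0 := by
        rw [map_sub, huv', sub_self]
      obtain ⟨t, ht⟩ := mem_range_of_pi_zero (a ≫ b) i _ this
      have hbt : b.f i ((a.f i) t) = b.f i (z - w) := by
        rw [map_sub]
        simpa using ht
      have hzw : a.f i t = z - w := hb i hbt
      have hfin : (cokernel.π a).f i (z - w) = 0 := by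
        rw [← hzw]
        have h0 : a.f i ≫ (cokernel.π a).f i = 0 := by
          rw [← HomologicalComplex.comp_f, cokernel.condition]
          rfl
        have := ConcreteCategory.congr_hom h0 t
        simpa using this
      rw [map_sub] at hfin
      exact sub_eq_zero.mp hfin
    · rw [AddCommGrpCat.epi_iff_surjective]
      intro y
      obtain ⟨z, rfl⟩ := pi_surjective b i y
      exact ⟨(cokernel.π (a ≫ b)).f i z, comm2 z⟩
  have e2 := hS.homology_exact₂ n
  refine e2.isZero_X₂ ?_ ?_
  · exact h1.eq_of_src _ _
  · exact h3.eq_of_tgt _ _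

end SES

/-- The union of two homological `Zₙ`-sets in `X` is a homological `Zₙ`-set in `X`. -/
theorem stmt_1 (X : Type) [TopologicalSpace X] (n : ℕ) (A B : Set X)
    (hA : IsHomologicalZSet X n A) (hB : IsHomologicalZSet X n B) :
    IsHomologicalZSet X n (A ∪ B) := by
  refine ⟨hA.1.union hB.1, fun U hU k hk => ?_⟩
  let a : C({x : U | (x : X) ∉ A ∪ B}, {x : U | (x : X) ∉ A}) :=
    ⟨fun x => ⟨x.1, fun h => x.2 (Or.inl h)⟩, Continuous.subtype_mk continuous_subtype_val _⟩
  let b : C({x : U | (x : X) ∉ A}, U) := ⟨Subtype.val, continuous_subtype_val⟩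
  have hfact : (singularChainsMap
        ⟨(Subtype.val : {x : U | (x : X) ∉ A ∪ B} → U), continuous_subtype_val⟩)
      = singularChainsMap a ≫ singularChainsMap b := by
    rw [← singularChainsMap_comp]
    rfl
  show IsZero ((cokernel (singularChainsMap
      ⟨(Subtype.val : {x : U | (x : X) ∉ A ∪ B} → U), continuous_subtype_val⟩)).homology k)
  rw [hfact]
  apply isZero_of_ses
  · intro i
    exact singularChainsMap_f_injective b Subtype.val_injective i
  · -- H_k of (U \ A, (U \ A) \ B) vanishes
    have hW : IsOpen (U ∩ Aᶜ) := hU.inter hA.1.isOpen_compl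
    have hBz := hB.2 (U ∩ Aᶜ) hW k hk
    let e₁ : {x : U | (x : X) ∉ A ∪ B} ≃ₜ {x : (U ∩ Aᶜ : Set X) | (x : X) ∉ B} :=
      { toFun := fun x => ⟨⟨x.1.1, x.1.2, fun h => x.2 (Or.inl h)⟩, fun h => x.2 (Or.inr h)⟩
        invFun := fun y => ⟨⟨y.1.1, y.1.2.1⟩,
          fun h => h.elim (fun hA' => y.1.2.2 hA') (fun hB' => y.2 hB')⟩
        left_inv := fun _ => rfl
        right_inv := fun _ => rfl
        continuous_toFun := Continuous.subtype_mk
          (Continuous.subtype_mk (continuous_subtype_val.comp continuous_subtype_val) _) _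
        continuous_invFun := Continuous.subtype_mk
          (Continuous.subtype_mk (continuous_subtype_val.comp continuous_subtype_val) _) _ }
    let e₂ : {x : U | (x : X) ∉ A} ≃ₜ (U ∩ Aᶜ : Set X) :=
      { toFun := fun x => ⟨x.1.1, x.1.2, x.2⟩
        invFun := fun y => ⟨⟨y.1, y.2.1⟩, y.2.2⟩
        left_inv := fun _ => rfl
        right_inv := fun _ => rfl
        continuous_toFun := Continuous.subtype_mk
          (continuous_subtype_val.comp continuous_subtype_val) _
        continuous_invFun := Continuous.subtype_mk
          (Continuous.subtype_mk continuous_subtype_val _) _ }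
    have hsq : singularChainsMap a ≫ (singularChainsIso e₂).hom
        = (singularChainsIso e₁).hom ≫ singularChainsMap
          ⟨(Subtype.val : {x : (U ∩ Aᶜ : Set X) | (x : X) ∉ B} → (U ∩ Aᶜ : Set X)),
            continuous_subtype_val⟩ := by
      show singularChainsMap a ≫ singularChainsMap e₂.toContinuousMap
        = singularChainsMap e₁.toContinuousMap ≫ singularChainsMap _
      rw [← singularChainsMap_comp, ← singularChainsMap_comp]
      rfl
    have hiso := cokernel.mapIso (f := singularChainsMap a)
      (singularChainsMap ⟨(Subtype.val : {x : (U ∩ Aᶜ : Set X) | (x : X) ∉ B} →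
        (U ∩ Aᶜ : Set X)), continuous_subtype_val⟩)
      (singularChainsIso e₁) (singularChainsIso e₂) hsq
    exact hBz.of_iso
      ((HomologicalComplex.homologyFunctor AddCommGrpCat (ComplexShape.down ℕ) k).mapIso hiso)
  · exact hA.2 U hU k hk
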